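/- Let u(θ) = θ' S_n - Σ_{i=1}^n [log(1+p_i(e^{θ'c_i}-1)) - θ'c_i p_i], i.e., u(θ) = log K_n^θ where K_n^θ = e^{θ'Σ c_i x_i}/∏(1+p_i(e^{θ'c_i}-1)) and S_n = Σ_{i=1}^n c_i(x_i - p_i). Then for any unit vector θ ∈ ℝ^d and any ε > 0, with L = max_{1≤i≤n} ‖c_i‖ and V_n = Σ_{i=1}^n c_i c_i' p_i(1-p_i), one has u(εθ) ≥ ε θ'S_n − (ε²/2) θ'V_n θ e^{εL}. -/

import Mathlib

open Real RealInnerProductSpace Finset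

private lemma exp_le_quadratic_of_nonpos {z : ℝ} (hz : z ≤ 0) :
    Real.exp z ≤ 1 + z + z ^ 2 / 2 := by
  have hanti : Antitone (fun t : ℝ => 1 + t + t ^ 2 / 2 - Real.exp t) := by
    apply antitone_of_deriv_nonpos
    · fun_prop
    · intro t
      have h : HasDerivAt (fun t : ℝ => 1 + t + t ^ 2 / 2 - Real.exp t)
          (1 + t - Real.exp t) t := by
        have h1 : HasDerivAt (fun t : ℝ => t ^ 2 / 2) t t := by
          simpa using (hasDerivAt_pow 2 t).div_const 2
        have h2 : HasDerivAt (fun t : ℝ => 1 + t + t ^ 2 / 2 - Real.exp t)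
            (0 + 1 + t - Real.exp t) t :=
          (((hasDerivAt_const t (1:ℝ)).add (hasDerivAt_id t)).add h1).sub (Real.hasDerivAt_exp t)
        simpa using h2
      rw [h.deriv]
      have := Real.add_one_le_exp t
      linarith
  have := hanti hz
  simp only [Real.exp_zero] at this
  nlinarith [this]

private lemma exp_le_one_add_add_sq_half_mul_exp_abs (z : ℝ) :
    Real.exp z ≤ 1 + z + z ^ 2 / 2 * Real.exp |z| := by
  rcases le_or_gt z 0 with hz | hz
  · rw [abs_of_nonpos hz]
    have h1 := exp_le_quadratic_of_nonpos hz
    have h2 : (1:ℝ) ≤ Real.exp (-z) := Real.one_le_exp (by linarith)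
    nlinarith [sq_nonneg z]
  · rw [abs_of_pos hz]
    -- show g z ≥ 0 where g t = 1 + t + t^2/2 * exp t - exp t
    set g : ℝ → ℝ := fun t => 1 + t + t ^ 2 / 2 * Real.exp t - Real.exp t with hg
    have hderiv : ∀ t : ℝ, HasDerivAt g
        (1 + (t * Real.exp t + t ^ 2 / 2 * Real.exp t) - Real.exp t) t := by
      intro t
      have h1 : HasDerivAt (fun t : ℝ => t ^ 2 / 2) t t := by
        simpa using (hasDerivAt_pow 2 t).div_const 2
      have h2 : HasDerivAt (fun t : ℝ => t ^ 2 / 2 * Real.exp t)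
          (t * Real.exp t + t ^ 2 / 2 * Real.exp t) t := h1.mul (Real.hasDerivAt_exp t)
      have h3 : HasDerivAt g (0 + 1 + (t * Real.exp t + t ^ 2 / 2 * Real.exp t) - Real.exp t) t :=
        (((hasDerivAt_const t (1:ℝ)).add (hasDerivAt_id t)).add h2).sub (Real.hasDerivAt_exp t)
      simpa using h3
    set g' : ℝ → ℝ := fun t => 1 + (t * Real.exp t + t ^ 2 / 2 * Real.exp t) - Real.exp t with hg'
    have hderiv2 : ∀ t : ℝ, HasDerivAt g'
        ((Real.exp t + t * Real.exp t) + (t * Real.exp t + t ^ 2 / 2 * Real.exp t)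
          - Real.exp t) t := by
      intro t
      have h1 : HasDerivAt (fun t : ℝ => t ^ 2 / 2) t t := by
        simpa using (hasDerivAt_pow 2 t).div_const 2
      have h2 : HasDerivAt (fun t : ℝ => t ^ 2 / 2 * Real.exp t)
          (t * Real.exp t + t ^ 2 / 2 * Real.exp t) t := h1.mul (Real.hasDerivAt_exp t)
      have h4 : HasDerivAt (fun t : ℝ => t * Real.exp t)
          (1 * Real.exp t + t * Real.exp t) t := (hasDerivAt_id t).mul (Real.hasDerivAt_exp t)
      have h3 : HasDerivAt g'
          (0 + (1 * Real.exp t + t * Real.exp t + (t * Real.exp t + t ^ 2 / 2 * Real.exp t))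
            - Real.exp t) t :=
        ((hasDerivAt_const t (1:ℝ)).add (h4.add h2)).sub (Real.hasDerivAt_exp t)
      simpa [add_assoc] using h3
    have hg'mono : MonotoneOn g' (Set.Ici (0:ℝ)) := by
      apply monotoneOn_of_deriv_nonneg (convex_Ici 0)
      · exact (Continuous.continuousOn (by fun_prop))
      · intro t _
        exact (hderiv2 t).differentiableAt.differentiableWithinAt
      · intro t ht
        rw [interior_Ici] at ht
        rw [(hderiv2 t).deriv]
        have h0 : (0:ℝ) < t := ht
        have he : 0 < Real.exp t := Real.exp_pos t
        nlinarith
    have hg'nonneg : ∀ t ∈ Set.Ici (0:ℝ), 0 ≤ g' t := by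
      intro t ht
      have := hg'mono (Set.self_mem_Ici) ht ht
      simpa [hg'] using this
    have hgmono : MonotoneOn g (Set.Ici (0:ℝ)) := by
      apply monotoneOn_of_deriv_nonneg (convex_Ici 0)
      · exact (Continuous.continuousOn (by fun_prop))
      · intro t _
        exact (hderiv t).differentiableAt.differentiableWithinAt
      · intro t ht
        rw [interior_Ici] at ht
        rw [(hderiv t).deriv]
        exact hg'nonneg t (Set.mem_Ici.mpr (le_of_lt ht))
    have := hgmono Set.self_mem_Ici (Set.mem_Ici.mpr hz.le) hz.le
    simp only [hg, Real.exp_zero] at this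
    nlinarith [this]

private lemma log_one_add_le {pp y : ℝ} (hp0 : 0 < pp) (hp1 : pp < 1) :
    Real.log (1 + pp * (Real.exp y - 1))
      ≤ pp * y + pp * (1 - pp) * y ^ 2 / 2 * Real.exp |y| := by
  have hey : 0 < Real.exp y := Real.exp_pos y
  have hpos : 0 < 1 + pp * (Real.exp y - 1) := by nlinarith
  set M := pp * (1 - pp) * y ^ 2 / 2 * Real.exp |y| with hM
  have hMnn : 0 ≤ M := by
    have h0 : 0 ≤ pp * (1 - pp) * y ^ 2 / 2 :=
      div_nonneg (mul_nonneg (mul_nonneg hp0.le (by linarith)) (sq_nonneg _)) (by norm_num)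
    exact mul_nonneg h0 (Real.exp_pos _).le
  have hA1 := exp_le_one_add_add_sq_half_mul_exp_abs (-(pp * y))
  have hA2 := exp_le_one_add_add_sq_half_mul_exp_abs ((1 - pp) * y)
  have habs1 : Real.exp |-(pp * y)| ≤ Real.exp |y| := by
    apply Real.exp_le_exp.mpr
    rw [abs_neg, abs_mul, abs_of_pos hp0]
    nlinarith [abs_nonneg y]
  have habs2 : Real.exp |(1 - pp) * y| ≤ Real.exp |y| := by
    apply Real.exp_le_exp.mpr
    rw [abs_mul, abs_of_pos (by linarith : (0:ℝ) < 1 - pp)]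
    nlinarith [abs_nonneg y]
  have key' : (1 - pp) * Real.exp (-(pp * y)) + pp * Real.exp ((1 - pp) * y) ≤ 1 + M := by
    have h1 : (1 - pp) * Real.exp (-(pp * y))
        ≤ (1 - pp) * (1 + -(pp * y) + (pp * y) ^ 2 / 2 * Real.exp |y|) := by
      have : Real.exp (-(pp * y)) ≤ 1 + -(pp * y) + (pp * y) ^ 2 / 2 * Real.exp |y| := by
        calc Real.exp (-(pp * y))
            ≤ 1 + -(pp * y) + (-(pp * y)) ^ 2 / 2 * Real.exp |-(pp * y)| := hA1
          _ ≤ 1 + -(pp * y) + (pp * y) ^ 2 / 2 * Real.exp |y| := by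
              have h2 : (0:ℝ) ≤ (pp * y) ^ 2 / 2 := by positivity
              have : (-(pp * y)) ^ 2 = (pp * y) ^ 2 := by ring
              rw [this]
              nlinarith [Real.exp_pos |-(pp * y)|]
      nlinarith [this]
    have h2 : pp * Real.exp ((1 - pp) * y)
        ≤ pp * (1 + (1 - pp) * y + ((1 - pp) * y) ^ 2 / 2 * Real.exp |y|) := by
      have : Real.exp ((1 - pp) * y) ≤ 1 + (1 - pp) * y + ((1 - pp) * y) ^ 2 / 2 * Real.exp |y| := by
        calc Real.exp ((1 - pp) * y)
            ≤ 1 + (1 - pp) * y + ((1 - pp) * y) ^ 2 / 2 * Real.exp |(1 - pp) * y| := hA2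
          _ ≤ 1 + (1 - pp) * y + ((1 - pp) * y) ^ 2 / 2 * Real.exp |y| := by
              have h3 : (0:ℝ) ≤ ((1 - pp) * y) ^ 2 / 2 := by positivity
              nlinarith [Real.exp_pos |(1 - pp) * y|]
      nlinarith [this]
    have hexpy : 0 < Real.exp |y| := Real.exp_pos |y|
    nlinarith [h1, h2]
  have key : 1 + pp * (Real.exp y - 1) ≤ Real.exp (pp * y) * (1 + M) := by
    have hsplit : Real.exp (pp * y) * ((1 - pp) * Real.exp (-(pp * y))
        + pp * Real.exp ((1 - pp) * y)) = 1 + pp * (Real.exp y - 1) := by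
      rw [mul_add, ← mul_assoc, ← mul_assoc, mul_comm (Real.exp (pp * y)) (1 - pp),
        mul_comm (Real.exp (pp * y)) pp, mul_assoc, mul_assoc, ← Real.exp_add, ← Real.exp_add]
      ring_nf
      rw [Real.exp_zero]
      ring
    rw [← hsplit]
    have := Real.exp_pos (pp * y)
    nlinarith [key']
  calc Real.log (1 + pp * (Real.exp y - 1))
      ≤ Real.log (Real.exp (pp * y) * (1 + M)) := by
        apply Real.log_le_log hpos key
    _ = pp * y + Real.log (1 + M) := by
        rw [Real.log_mul (Real.exp_ne_zero _) (by linarith), Real.log_exp]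
    _ ≤ pp * y + M := by
        have := Real.log_le_sub_one_of_pos (show (0:ℝ) < 1 + M by linarith)
        linarith

/-- Lower bound on the log-capital of the logistic strategy:
`u(εθ) ≥ ε θ'S_n − (ε²/2) θ'V_nθ e^{εL}` for unit vectors `θ`. -/
theorem log_capital_lower_bound {d n : ℕ} (hn : 0 < n)
    (p x : Fin n → ℝ) (c : Fin n → EuclideanSpace ℝ (Fin d))
    (hp : ∀ i, p i ∈ Set.Ioo (0:ℝ) 1)
    (hx : ∀ i, x i = 0 ∨ x i = 1)
    (L : ℝ) (hL : IsGreatest (Set.range fun i => ‖c i‖) L)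
    (u : EuclideanSpace ℝ (Fin d) → ℝ)
    (hu : ∀ ϑ, u ϑ = ⟪ϑ, ∑ i, x i • c i⟫
        - ∑ i, Real.log (1 + p i * (Real.exp ⟪ϑ, c i⟫ - 1)))
    (S : EuclideanSpace ℝ (Fin d)) (hS : S = ∑ i, (x i - p i) • c i) :
    ∀ θ : EuclideanSpace ℝ (Fin d), ‖θ‖ = 1 → ∀ ε : ℝ, 0 < ε →
      u (ε • θ) ≥ ε * ⟪θ, S⟫
        - ε ^ 2 / 2 * (∑ i, p i * (1 - p i) * ⟪θ, c i⟫ ^ 2) * Real.exp (ε * L) := by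
  intro θ hθ ε hε
  have hθc : ∀ i, |⟪θ, c i⟫| ≤ L := by
    intro i
    calc |⟪θ, c i⟫| ≤ ‖θ‖ * ‖c i‖ := abs_real_inner_le_norm θ (c i)
      _ = ‖c i‖ := by rw [hθ, one_mul]
      _ ≤ L := hL.2 (Set.mem_range_self i)
  -- per-term inequality
  have key : ∀ i ∈ Finset.univ (α := Fin n),
      Real.log (1 + p i * (Real.exp (ε * ⟪θ, c i⟫) - 1))
        ≤ p i * (ε * ⟪θ, c i⟫) + ε ^ 2 / 2 * (p i * (1 - p i) * ⟪θ, c i⟫ ^ 2)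
            * Real.exp (ε * L) := by
    intro i _
    have h1 := log_one_add_le (hp i).1 (hp i).2 (y := ε * ⟪θ, c i⟫)
    have habs : Real.exp |ε * ⟪θ, c i⟫| ≤ Real.exp (ε * L) := by
      apply Real.exp_le_exp.mpr
      rw [abs_mul, abs_of_pos hε]
      exact mul_le_mul_of_nonneg_left (hθc i) hε.le
    have hcoef : 0 ≤ p i * (1 - p i) * (ε * ⟪θ, c i⟫) ^ 2 / 2 := by
      have h1 := (hp i).1
      have h2 := (hp i).2
      exact div_nonneg (mul_nonneg (mul_nonneg h1.le (by linarith)) (sq_nonneg _)) (by norm_num)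
    have h2 : p i * (1 - p i) * (ε * ⟪θ, c i⟫) ^ 2 / 2 * Real.exp |ε * ⟪θ, c i⟫|
        ≤ ε ^ 2 / 2 * (p i * (1 - p i) * ⟪θ, c i⟫ ^ 2) * Real.exp (ε * L) := by
      have heq : ε ^ 2 / 2 * (p i * (1 - p i) * ⟪θ, c i⟫ ^ 2)
          = p i * (1 - p i) * (ε * ⟪θ, c i⟫) ^ 2 / 2 := by ring
      rw [heq]
      exact mul_le_mul_of_nonneg_left habs hcoef
    linarith
  have hsum := Finset.sum_le_sum key
  rw [hu, hS, ge_iff_le]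
  simp only [inner_sum, real_inner_smul_left, real_inner_smul_right]
  rw [Finset.sum_add_distrib] at hsum
  have e1 : ε * ∑ i, (x i - p i) * ⟪θ, c i⟫
      = (∑ i, x i * (ε * ⟪θ, c i⟫)) - ∑ i, p i * (ε * ⟪θ, c i⟫) := by
    rw [Finset.mul_sum, ← Finset.sum_sub_distrib]
    exact Finset.sum_congr rfl fun i _ => by ring
  have e2 : (ε ^ 2 / 2 * ∑ i, p i * (1 - p i) * ⟪θ, c i⟫ ^ 2) * Real.exp (ε * L)
      = ∑ i, ε ^ 2 / 2 * (p i * (1 - p i) * ⟪θ, c i⟫ ^ 2) * Real.exp (ε * L) := by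
    rw [Finset.mul_sum, Finset.sum_mul]
  rw [e1, e2]
  linarith [hsum]
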